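/- arXiv:0903.0138 — 3 statements merged into one kernel-verified Lean document; each statement's English description precedes it below -/
import Mathlib

section
/- The number of isomorphism classes of finite trees with at most E edges in which every vertex has valence 1 or 3 (trivalent trees) grows at least exponentially in E: there exist constants c > 1 and E₀ such that for all E ≥ E₀, the number of such isomorphism classes is at least c^E. -/
/-!
Statement 8: the number of isomorphism classes of finite trees with at most
`E` edges in which every vertex has valence `1` or `3` grows at least
exponentially in `E`.
-/

/-- A finite graph (on `Fin n`) is a trivalent tree if it is a tree and every
vertex has degree `1` or `3`. -/
def IsTrivalentTree {n : ℕ} (G : SimpleGraph (Fin n)) : Prop :=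
  G.IsTree ∧ ∀ v : Fin n, (G.neighborSet v).ncard = 1 ∨ (G.neighborSet v).ncard = 3



namespace TTT

structure PT (V : Type) where
  p : V → V
  ht : V → ℕ
  root : V
  hroot : p root = root
  hht : ∀ v, v ≠ root → ht (p v) + 1 = ht v

variable {V : Type} (T : PT V)

def PT.G : SimpleGraph V where
  Adj u v := u ≠ v ∧ (T.p u = v ∨ T.p v = u)
  symm := by constructor; intro u v h; exact ⟨Ne.symm h.1, h.2.symm⟩
  loopless := by constructor; intro v h; exact h.1 rfl

lemma PT.adj_iff {u v : V} : T.G.Adj u v ↔ u ≠ v ∧ (T.p u = v ∨ T.p v = u) := Iff.rfl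

lemma PT.ne_root_of_p_ne {v : V} (h : T.p v ≠ v) : v ≠ root T := by
  intro hv; rw [hv] at h; exact h T.hroot

lemma PT.adj_ht {u v : V} (h : T.G.Adj u v) : T.ht u = T.ht v + 1 ∨ T.ht v = T.ht u + 1 := by
  rcases h with ⟨hne, hp | hp⟩
  · left
    have : u ≠ T.root := by
      intro hu; rw [hu, T.hroot] at hp; exact hne (hu.trans hp)
    rw [← hp]; exact (T.hht u this).symm
  · right
    have : v ≠ T.root := by
      intro hv; rw [hv, T.hroot] at hp; exact hne (hp.symm.trans hv.symm)
    rw [← hp]; exact (T.hht v this).symm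

lemma PT.adj_p {v : V} (h : v ≠ T.root) : T.G.Adj v (T.p v) := by
  refine ⟨?_, Or.inl rfl⟩
  intro he
  have := T.hht v h
  rw [← he] at this
  omega

lemma PT.reachable_root : ∀ (n : ℕ) (v : V), T.ht v ≤ n → T.G.Reachable v T.root := by
  intro n
  induction n with
  | zero =>
    intro v hv
    by_cases h : v = T.root
    · exact h ▸ SimpleGraph.Reachable.refl _
    · have := T.hht v h; omega
  | succ n ih =>
    intro v hv
    by_cases h : v = T.root
    · exact h ▸ SimpleGraph.Reachable.refl _
    · have h1 := T.hht v h
      exact (T.adj_p h).reachable.trans (ih (T.p v) (by omega))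

lemma PT.connected : T.G.Connected := by
  have : Nonempty V := ⟨T.root⟩
  rw [SimpleGraph.connected_iff]
  refine ⟨fun u v => ?_, this⟩
  exact (T.reachable_root (T.ht u) u le_rfl).trans (T.reachable_root (T.ht v) v le_rfl).symm

/-- descendants -/
def PT.desc (v : V) : Set V := {u | ∃ n, T.p^[n] u = v}

lemma PT.ht_le_of_desc {v u : V} (hv : v ≠ T.root) : ∀ n, T.p^[n] u = v → T.ht v ≤ T.ht u := by
  intro n
  induction n generalizing u with
  | zero => intro h; exact le_of_eq (congrArg T.ht h.symm)
  | succ n ih =>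
    intro h
    rw [Function.iterate_succ_apply] at h
    have h2 := ih h
    by_cases hu : u = T.root
    · rw [hu, T.hroot] at h2; rw [hu]; exact h2
    · have := T.hht u hu; omega

lemma PT.acyclic : T.G.IsAcyclic := by
  rw [SimpleGraph.isAcyclic_iff_forall_adj_isBridge]
  -- WLOG the edge is (v, p v) with v ≠ root
  have key : ∀ v : V, v ≠ T.root → T.G.IsBridge s(v, T.p v) := by
    intro v hv
    rw [SimpleGraph.isBridge_iff]
    intro hr
    -- walks in the deleted graph starting at v stay in desc v
    set G' := T.G \ SimpleGraph.fromEdgeSet {s(v, T.p v)} with hG'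
    have step : ∀ a b : V, G'.Adj a b → a ∈ T.desc v → b ∈ T.desc v := by
      intro a b hab ⟨n, hn⟩
      have hadj : T.G.Adj a b := hab.1
      have hne : ¬ (s(a, b) : Sym2 V) = s(v, T.p v) := by
        intro h
        exact hab.2 ⟨h, hadj.ne⟩
      rcases hadj with ⟨hne', hp | hp⟩
      · -- b = p a
        rcases Nat.eq_zero_or_pos n with h0 | h0
        · -- a = v, b = p v : the deleted edge
          rw [h0] at hn; simp at hn
          subst hn
          exact absurd (by rw [← hp]) hne
        · obtain ⟨n', rfl⟩ := Nat.exists_eq_succ_of_ne_zero (Nat.pos_iff_ne_zero.mp h0)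
          refine ⟨n', ?_⟩
          rw [Function.iterate_succ_apply, hp] at hn
          exact hn
      · exact ⟨n + 1, by rw [Function.iterate_succ_apply, hp, hn]⟩
    have walkstep : ∀ (a b : V) (w : G'.Walk a b), a ∈ T.desc v → b ∈ T.desc v := by
      intro a b w
      induction w with
      | nil => exact id
      | cons h w ih => intro ha; exact ih (step _ _ h ha)
    obtain ⟨w⟩ := hr
    have hpv : T.p v ∈ T.desc v := walkstep _ _ w ⟨0, rfl⟩
    obtain ⟨n, hn⟩ := hpv
    have h1 : T.ht v ≤ T.ht (T.p v) := T.ht_le_of_desc hv n hn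
    have := T.hht v hv
    omega
  intro u w huw
  rcases huw with ⟨hne, hp | hp⟩
  · have hu : u ≠ T.root := by
      intro h; rw [h, T.hroot] at hp; exact hne (h.trans hp)
    have := key u hu
    rwa [hp] at this
  · have hw : w ≠ T.root := by
      intro h; rw [h, T.hroot] at hp; exact hne (hp.symm.trans h.symm)
    have := key w hw
    rw [hp] at this
    rwa [Sym2.eq_swap] at this

end TTT

namespace TTT2

lemma iso_dist_le {V W : Type} {G : SimpleGraph V} {H : SimpleGraph W} (e : G ≃g H) (u v : V) :
    H.dist (e u) (e v) ≤ G.dist u v := by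
  by_cases hr : G.Reachable u v
  · obtain ⟨w, hw⟩ := hr.exists_walk_length_eq_dist
    calc H.dist (e u) (e v) ≤ (w.map e.toHom).length := SimpleGraph.dist_le _
      _ = w.length := w.length_map e.toHom
      _ = G.dist u v := hw
  · have h1 : G.dist u v = 0 := by
      rw [SimpleGraph.dist_eq_zero_iff_eq_or_not_reachable]; exact Or.inr hr
    have h2 : H.dist (e u) (e v) = 0 := by
      rw [SimpleGraph.dist_eq_zero_iff_eq_or_not_reachable]
      exact Or.inr (fun h => hr (SimpleGraph.Iso.reachable_iff.mp h))
    omega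

lemma iso_dist {V W : Type} {G : SimpleGraph V} {H : SimpleGraph W} (e : G ≃g H) (u v : V) :
    H.dist (e u) (e v) = G.dist u v := by
  refine le_antisymm (iso_dist_le e u v) ?_
  have := iso_dist_le e.symm (e u) (e v)
  simpa using this

lemma iso_ncard_neighborSet {V W : Type} {G : SimpleGraph V} {H : SimpleGraph W} (e : G ≃g H)
    (v : V) : (H.neighborSet (e v)).ncard = (G.neighborSet v).ncard := by
  rw [← Nat.card_coe_set_eq, ← Nat.card_coe_set_eq]
  exact (Nat.card_congr (e.mapNeighborSet v)).symm

lemma iso_isTree {V W : Type} {G : SimpleGraph V} {H : SimpleGraph W} (e : G ≃g H)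
    (h : G.IsTree) : H.IsTree := by
  constructor
  · exact (SimpleGraph.Iso.connected_iff e).mp h.isConnected
  · intro v c hc
    have := h.IsAcyclic (c.map e.symm.toHom) (hc.map (e.symm.toEquiv.injective))
    exact this

/-- special vertex: degree 3 with two distinct leaf neighbours -/
def Sp {V : Type} (G : SimpleGraph V) (x : V) : Prop :=
  (G.neighborSet x).ncard = 3 ∧ ∃ a b, a ≠ b ∧ G.Adj x a ∧ G.Adj x b ∧
    (G.neighborSet a).ncard = 1 ∧ (G.neighborSet b).ncard = 1

/-- the invariant: set of distances between special vertices -/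
def Dinv {V : Type} (G : SimpleGraph V) : Set ℕ :=
  {d | ∃ x y, Sp G x ∧ Sp G y ∧ G.dist x y = d}

lemma iso_sp {V W : Type} {G : SimpleGraph V} {H : SimpleGraph W} (e : G ≃g H) (x : V)
    (h : Sp G x) : Sp H (e x) := by
  obtain ⟨h3, a, b, hab, ha, hb, ha1, hb1⟩ := h
  refine ⟨by rw [iso_ncard_neighborSet e]; exact h3, e a, e b, ?_, ?_, ?_, ?_, ?_⟩
  · exact fun h => hab (e.toEquiv.injective h)
  · exact e.map_adj_iff.mpr ha
  · exact e.map_adj_iff.mpr hb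
  · rw [iso_ncard_neighborSet e]; exact ha1
  · rw [iso_ncard_neighborSet e]; exact hb1

lemma iso_Dinv {V W : Type} {G : SimpleGraph V} {H : SimpleGraph W} (e : G ≃g H) :
    Dinv G = Dinv H := by
  ext d
  constructor
  · rintro ⟨x, y, hx, hy, hd⟩
    exact ⟨e x, e y, iso_sp e x hx, iso_sp e y hy, by rw [iso_dist e]; exact hd⟩
  · rintro ⟨x, y, hx, hy, hd⟩
    refine ⟨e.symm x, e.symm y, iso_sp e.symm x hx, iso_sp e.symm y hy, ?_⟩
    rw [iso_dist e.symm]; exact hd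

end TTT2

namespace TTT

variable {V : Type} (T : PT V)

/-- extra assumption: height of root is 0 -/
lemma ne_root_of_ht_pos (hzr : T.ht T.root = 0) {v : V} (h : 0 < T.ht v) : v ≠ T.root := by
  intro he; rw [he, hzr] at h; omega

lemma PT.ht_iterate : ∀ (n : ℕ) (v : V), T.ht T.root = 0 → n ≤ T.ht v →
    T.ht (T.p^[n] v) + n = T.ht v := by
  intro n
  induction n with
  | zero => intro v _ _; simp
  | succ n ih =>
    intro v hzr hv
    have hvr : v ≠ T.root := ne_root_of_ht_pos T hzr (by omega)
    have h1 := T.hht v hvr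
    rw [Function.iterate_succ_apply]
    have := ih (T.p v) hzr (by omega)
    omega

lemma PT.walk_iterate : ∀ (n : ℕ) (v : V), T.ht T.root = 0 → n ≤ T.ht v →
    ∃ w : T.G.Walk v (T.p^[n] v), w.length = n := by
  intro n
  induction n with
  | zero => intro v _ _; exact ⟨SimpleGraph.Walk.nil, rfl⟩
  | succ n ih =>
    intro v hzr hv
    have hvr : v ≠ T.root := ne_root_of_ht_pos T hzr (by omega)
    have h1 := T.hht v hvr
    obtain ⟨w, hw⟩ := ih (T.p v) hzr (by omega)
    rw [Function.iterate_succ_apply]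
    exact ⟨SimpleGraph.Walk.cons (T.adj_p hvr) w, by simp [hw]⟩

lemma PT.ht_le_walk : ∀ {a b : V} (w : T.G.Walk a b),
    T.ht a ≤ T.ht b + w.length ∧ T.ht b ≤ T.ht a + w.length := by
  intro a b w
  induction w with
  | nil => simp
  | cons h w ih =>
    rcases T.adj_ht h with h1 | h1 <;> simp [SimpleGraph.Walk.length_cons] <;> omega

lemma PT.dist_ge (u v : V) : T.ht u ≤ T.ht v + T.G.dist u v ∧ T.ht v ≤ T.ht u + T.G.dist u v := by
  obtain ⟨w, hw⟩ := (T.connected u v).exists_walk_length_eq_dist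
  have := T.ht_le_walk w
  omega

lemma PT.dist_eq_of (u v : V) (n : ℕ) (w : T.G.Walk u v) (hw : w.length = n)
    (hht : T.ht u = T.ht v + n ∨ T.ht v = T.ht u + n) : T.G.dist u v = n := by
  have h1 : T.G.dist u v ≤ n := hw ▸ SimpleGraph.dist_le w
  have h2 := T.dist_ge u v
  omega

end TTT

namespace CT

open TTT

variable (k : ℕ) (s : Fin k → Bool)

def M : ℕ := 3*k+6

def cpos (n : ℕ) : Prop := ∃ j : Fin k, s j = true ∧ n = 2*k+3+j.val

instance : DecidablePred (cpos k s) := fun n => by unfold cpos; infer_instance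

def f (i : Fin (M k + 1)) : ℕ :=
  if cpos k s i.val then 3 else if 0 < i.val ∧ i.val < M k then 1 else 0

abbrev Vt := Fin (M k + 1) ⊕ Σ i : Fin (M k + 1), Fin (f k s i)

abbrev sp (i : Fin (M k + 1)) : Vt k s := Sum.inl i

abbrev pn (i : Fin (M k + 1)) (a : Fin (f k s i)) : Vt k s := Sum.inr ⟨i, a⟩

lemma cpos_bounds {n : ℕ} (h : cpos k s n) : 2*k+3 ≤ n ∧ n ≤ 3*k+2 := by
  obtain ⟨j, _, rfl⟩ := h
  have := j.isLt
  omega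

lemma f_vals (i : Fin (M k + 1)) : f k s i = 0 ∨ f k s i = 1 ∨ f k s i = 3 := by
  unfold f; split_ifs <;> simp

lemma f_pos_iff (i : Fin (M k + 1)) : 0 < f k s i ↔ 0 < i.val ∧ i.val < M k := by
  unfold f
  split_ifs with h1 h2
  · have := cpos_bounds k s h1
    unfold M at *
    constructor <;> intro <;> [omega; omega]
  · simp [h2]
  · simp; omega

lemma f_eq_three_iff (i : Fin (M k + 1)) : f k s i = 3 ↔ cpos k s i.val := by
  unfold f; split_ifs with h1 h2 <;> simp_all

lemma f_eq_one (i : Fin (M k + 1)) (h1 : 0 < i.val) (h2 : i.val < M k)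
    (h3 : ¬ cpos k s i.val) : f k s i = 1 := by
  unfold f; rw [if_neg h3, if_pos ⟨h1, h2⟩]

def par : Vt k s → Vt k s
  | Sum.inl i => Sum.inl ⟨i.val - 1, by omega⟩
  | Sum.inr ⟨i, a⟩ => if a.val = 0 then Sum.inl i else Sum.inr ⟨i, ⟨0, a.pos⟩⟩

def hgt : Vt k s → ℕ
  | Sum.inl i => i.val
  | Sum.inr ⟨i, a⟩ => if a.val = 0 then i.val + 1 else i.val + 2

lemma par_sp (i : Fin (M k + 1)) : par k s (sp k s i) = sp k s ⟨i.val - 1, by omega⟩ := rfl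

lemma hgt_sp (i : Fin (M k + 1)) : hgt k s (sp k s i) = i.val := rfl

lemma par_pn (i : Fin (M k + 1)) (a : Fin (f k s i)) :
    par k s (pn k s i a) = if a.val = 0 then sp k s i else pn k s i ⟨0, a.pos⟩ := rfl

lemma hgt_pn (i : Fin (M k + 1)) (a : Fin (f k s i)) :
    hgt k s (pn k s i a) = if a.val = 0 then i.val + 1 else i.val + 2 := rfl

lemma sp_inj {i j : Fin (M k + 1)} : sp k s i = sp k s j ↔ i.val = j.val := by
  simp [Fin.ext_iff]

lemma sp_ne_pn (i j : Fin (M k + 1)) (b : Fin (f k s j)) : sp k s i ≠ pn k s j b := by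
  simp

lemma pn_inj {i j : Fin (M k + 1)} {a : Fin (f k s i)} {b : Fin (f k s j)} :
    pn k s i a = pn k s j b ↔ i = j ∧ a.val = b.val := by
  constructor
  · intro h
    simp only [Sum.inr.injEq, Sigma.mk.inj_iff] at h
    obtain ⟨h1, h2⟩ := h
    refine ⟨h1, ?_⟩
    subst h1
    simpa [Fin.ext_iff] using h2
  · rintro ⟨rfl, h⟩
    simp [Fin.ext_iff, h]

def TS : PT (Vt k s) where
  p := par k s
  ht := hgt k s
  root := sp k s ⟨0, by omega⟩
  hroot := by rw [par_sp, sp_inj]; simp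
  hht := by
    intro v hv
    match v with
    | Sum.inl i =>
      have hi : i.val ≠ 0 := fun h => hv ((sp_inj k s).mpr h)
      rw [show (Sum.inl i : Vt k s) = sp k s i from rfl, par_sp, hgt_sp, hgt_sp]
      simp only [Fin.val_mk]
      omega
    | Sum.inr ⟨i, a⟩ =>
      rw [show (Sum.inr ⟨i,a⟩ : Vt k s) = pn k s i a from rfl, par_pn]
      by_cases ha : a.val = 0
      · rw [if_pos ha, hgt_sp, hgt_pn, if_pos ha]
      · rw [if_neg ha, hgt_pn, hgt_pn, if_pos rfl, if_neg ha]

def GG : SimpleGraph (Vt k s) := (TS k s).G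

lemma adj_iff (u v : Vt k s) :
    (GG k s).Adj u v ↔ u ≠ v ∧ (par k s u = v ∨ par k s v = u) := Iff.rfl

lemma adj_sp_sp {i j : Fin (M k + 1)} :
    (GG k s).Adj (sp k s i) (sp k s j) ↔ (j.val + 1 = i.val ∨ i.val + 1 = j.val) := by
  rw [adj_iff, par_sp, par_sp]
  constructor
  · rintro ⟨hne, h | h⟩
    · rw [sp_inj] at h
      have : i.val ≠ j.val := fun hh => hne ((sp_inj k s).mpr hh)
      simp only [Fin.val_mk] at h
      omega
    · rw [sp_inj] at h
      have : i.val ≠ j.val := fun hh => hne ((sp_inj k s).mpr hh)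
      simp only [Fin.val_mk] at h
      omega
  · rintro (h | h)
    · refine ⟨fun hh => by rw [sp_inj] at hh; omega, Or.inl ?_⟩
      rw [sp_inj]; simp only [Fin.val_mk]; omega
    · refine ⟨fun hh => by rw [sp_inj] at hh; omega, Or.inr ?_⟩
      rw [sp_inj]; simp only [Fin.val_mk]; omega

lemma adj_sp_pn {i j : Fin (M k + 1)} {b : Fin (f k s j)} :
    (GG k s).Adj (sp k s i) (pn k s j b) ↔ j = i ∧ b.val = 0 := by
  rw [adj_iff, par_sp, par_pn]
  constructor
  · rintro ⟨hne, h | h⟩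
    · exact absurd h (sp_ne_pn k s _ _ _)
    · by_cases hb : b.val = 0
      · rw [if_pos hb] at h
        rw [sp_inj] at h
        exact ⟨Fin.ext h, hb⟩
      · rw [if_neg hb] at h
        exact absurd h.symm (sp_ne_pn k s _ _ _)
  · rintro ⟨rfl, hb⟩
    exact ⟨sp_ne_pn k s _ _ _, Or.inr (by rw [if_pos hb])⟩

lemma adj_pn_sp {i j : Fin (M k + 1)} {b : Fin (f k s j)} :
    (GG k s).Adj (pn k s j b) (sp k s i) ↔ j = i ∧ b.val = 0 := by
  rw [(GG k s).adj_comm, adj_sp_pn]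

lemma adj_pn_pn {i j : Fin (M k + 1)} {a : Fin (f k s i)} {b : Fin (f k s j)} :
    (GG k s).Adj (pn k s i a) (pn k s j b) ↔
      i = j ∧ ((a.val = 0 ∧ b.val ≠ 0) ∨ (b.val = 0 ∧ a.val ≠ 0)) := by
  rw [adj_iff, par_pn, par_pn]
  constructor
  · rintro ⟨hne, h | h⟩
    · by_cases ha : a.val = 0
      · rw [if_pos ha] at h
        exact absurd h (sp_ne_pn k s _ _ _)
      · rw [if_neg ha] at h
        rw [pn_inj] at h
        obtain ⟨h1, h2⟩ := h
        simp only [Fin.val_mk] at h2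
        exact ⟨h1, Or.inr ⟨by omega, ha⟩⟩
    · by_cases hb : b.val = 0
      · rw [if_pos hb] at h
        exact absurd h (sp_ne_pn k s _ _ _)
      · rw [if_neg hb] at h
        rw [pn_inj] at h
        obtain ⟨h1, h2⟩ := h
        simp only [Fin.val_mk] at h2
        exact ⟨h1.symm, Or.inl ⟨by omega, hb⟩⟩
  · rintro ⟨rfl, ⟨ha, hb⟩ | ⟨hb, ha⟩⟩
    · refine ⟨fun hh => ?_, Or.inr ?_⟩
      · obtain ⟨-, h2⟩ := (pn_inj k s).mp hh
        omega
      · rw [if_neg hb, pn_inj]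
        exact ⟨rfl, by simp only [Fin.val_mk]; omega⟩
    · refine ⟨fun hh => ?_, Or.inl ?_⟩
      · obtain ⟨-, h2⟩ := (pn_inj k s).mp hh
        omega
      · rw [if_neg ha, pn_inj]
        exact ⟨rfl, by simp only [Fin.val_mk]; omega⟩


lemma nb_sp_mid {iv : ℕ} (h1 : 0 < iv) (h2 : iv < M k) :
    (GG k s).neighborSet (sp k s ⟨iv, by omega⟩) =
      {sp k s ⟨iv-1, by omega⟩, sp k s ⟨iv+1, by omega⟩,
       pn k s ⟨iv, by omega⟩ ⟨0, (f_pos_iff k s _).mpr ⟨h1, h2⟩⟩} := by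
  ext x
  simp only [SimpleGraph.mem_neighborSet, Set.mem_insert_iff, Set.mem_singleton_iff]
  match x with
  | Sum.inl j =>
    rw [show (Sum.inl j : Vt k s) = sp k s j from rfl, adj_sp_sp]
    constructor
    · rintro (h | h)
      · left; rw [sp_inj]; simp only [Fin.val_mk] at *; omega
      · right; left; rw [sp_inj]; simp only [Fin.val_mk] at *; omega
    · rintro (h | h | h)
      · rw [sp_inj] at h; simp only [Fin.val_mk] at *; omega
      · rw [sp_inj] at h; simp only [Fin.val_mk] at *; omega
      · exact absurd h (sp_ne_pn k s _ _ _)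
  | Sum.inr ⟨j, b⟩ =>
    rw [show (Sum.inr ⟨j, b⟩ : Vt k s) = pn k s j b from rfl, adj_sp_pn]
    constructor
    · rintro ⟨rfl, hb⟩
      right; right
      rw [pn_inj]
      exact ⟨rfl, by simp only [Fin.val_mk]; omega⟩
    · rintro (h | h | h)
      · exact absurd h.symm (sp_ne_pn k s _ _ _)
      · exact absurd h.symm (sp_ne_pn k s _ _ _)
      · obtain ⟨h1, h2⟩ := (pn_inj k s).mp h
        exact ⟨h1, by simp only [Fin.val_mk] at h2; omega⟩

lemma nb_sp0 :
    (GG k s).neighborSet (sp k s ⟨0, by omega⟩) = {sp k s ⟨1, by unfold M; omega⟩} := by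
  ext x
  simp only [SimpleGraph.mem_neighborSet, Set.mem_singleton_iff]
  match x with
  | Sum.inl j =>
    rw [show (Sum.inl j : Vt k s) = sp k s j from rfl, adj_sp_sp, sp_inj]
    simp only [Fin.val_mk]
    omega
  | Sum.inr ⟨j, b⟩ =>
    rw [show (Sum.inr ⟨j, b⟩ : Vt k s) = pn k s j b from rfl, adj_sp_pn]
    constructor
    · rintro ⟨hj, hb⟩
      have h0 := b.pos
      rw [f_pos_iff] at h0
      rw [hj] at h0
      simp only [Fin.val_mk] at h0
      omega
    · intro h
      exact absurd h.symm (sp_ne_pn k s _ _ _)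

lemma nb_spM :
    (GG k s).neighborSet (sp k s ⟨M k, by omega⟩) =
      {sp k s ⟨M k - 1, by omega⟩} := by
  ext x
  simp only [SimpleGraph.mem_neighborSet, Set.mem_singleton_iff]
  match x with
  | Sum.inl j =>
    rw [show (Sum.inl j : Vt k s) = sp k s j from rfl, adj_sp_sp, sp_inj]
    simp only [Fin.val_mk]
    have := j.isLt
    constructor
    · rintro (h | h) <;> omega
    · intro h
      left
      unfold M at *
      omega
  | Sum.inr ⟨j, b⟩ =>
    rw [show (Sum.inr ⟨j, b⟩ : Vt k s) = pn k s j b from rfl, adj_sp_pn]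
    constructor
    · rintro ⟨hj, hb⟩
      have h0 := b.pos
      rw [f_pos_iff] at h0
      rw [hj] at h0
      simp only [Fin.val_mk] at h0
      omega
    · intro h
      exact absurd h.symm (sp_ne_pn k s _ _ _)

lemma nb_pn_center_one {i : Fin (M k + 1)} {a : Fin (f k s i)} (ha : a.val = 0)
    (hf : f k s i = 1) :
    (GG k s).neighborSet (pn k s i a) = {sp k s i} := by
  ext x
  simp only [SimpleGraph.mem_neighborSet, Set.mem_singleton_iff]
  match x with
  | Sum.inl j =>
    rw [show (Sum.inl j : Vt k s) = sp k s j from rfl, adj_pn_sp, sp_inj]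
    constructor
    · rintro ⟨rfl, -⟩; rfl
    · intro h; exact ⟨Fin.ext h.symm, ha⟩
  | Sum.inr ⟨j, b⟩ =>
    rw [show (Sum.inr ⟨j, b⟩ : Vt k s) = pn k s j b from rfl, adj_pn_pn]
    constructor
    · rintro ⟨rfl, ⟨h1, h2⟩ | ⟨h1, h2⟩⟩
      · have := b.isLt; omega
      · omega
    · intro h
      exact absurd h (Ne.symm (sp_ne_pn k s _ _ _))

lemma nb_pn_center_three {i : Fin (M k + 1)} {a : Fin (f k s i)} (ha : a.val = 0)
    (hf : f k s i = 3) :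
    (GG k s).neighborSet (pn k s i a) =
      {sp k s i, pn k s i ⟨1, by omega⟩, pn k s i ⟨2, by omega⟩} := by
  ext x
  simp only [SimpleGraph.mem_neighborSet, Set.mem_insert_iff, Set.mem_singleton_iff]
  match x with
  | Sum.inl j =>
    rw [show (Sum.inl j : Vt k s) = sp k s j from rfl, adj_pn_sp]
    constructor
    · rintro ⟨rfl, -⟩; left; rfl
    · rintro (h | h | h)
      · exact ⟨Fin.ext ((sp_inj k s).mp h).symm, ha⟩
      · exact absurd h (sp_ne_pn k s _ _ _)
      · exact absurd h (sp_ne_pn k s _ _ _)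
  | Sum.inr ⟨j, b⟩ =>
    rw [show (Sum.inr ⟨j, b⟩ : Vt k s) = pn k s j b from rfl, adj_pn_pn]
    constructor
    · rintro ⟨rfl, ⟨h1, h2⟩ | ⟨h1, h2⟩⟩
      · -- a = 0 and b ≠ 0 : b is 1 or 2
        have hb : b.val < 3 := by have := b.isLt; omega
        by_cases hb1 : b.val = 1
        · right; left; rw [pn_inj]; exact ⟨rfl, by simp only [Fin.val_mk]; omega⟩
        · right; right; rw [pn_inj]; exact ⟨rfl, by simp only [Fin.val_mk]; omega⟩
      · omega
    · rintro (h | h | h)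
      · exact absurd h (Ne.symm (sp_ne_pn k s _ _ _))
      · obtain ⟨rfl, h2⟩ := (pn_inj k s).mp h
        simp only [Fin.val_mk] at h2
        exact ⟨rfl, Or.inl ⟨ha, by omega⟩⟩
      · obtain ⟨rfl, h2⟩ := (pn_inj k s).mp h
        simp only [Fin.val_mk] at h2
        exact ⟨rfl, Or.inl ⟨ha, by omega⟩⟩

lemma nb_pn_leaf {i : Fin (M k + 1)} {a : Fin (f k s i)} (ha : a.val ≠ 0) :
    (GG k s).neighborSet (pn k s i a) = {pn k s i ⟨0, a.pos⟩} := by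
  ext x
  simp only [SimpleGraph.mem_neighborSet, Set.mem_singleton_iff]
  match x with
  | Sum.inl j =>
    rw [show (Sum.inl j : Vt k s) = sp k s j from rfl, adj_pn_sp]
    constructor
    · rintro ⟨rfl, hb⟩; exact absurd hb ha
    · intro h; exact absurd h (sp_ne_pn k s _ _ _)
  | Sum.inr ⟨j, b⟩ =>
    rw [show (Sum.inr ⟨j, b⟩ : Vt k s) = pn k s j b from rfl, adj_pn_pn]
    constructor
    · rintro ⟨rfl, ⟨h1, h2⟩ | ⟨h1, h2⟩⟩
      · omega
      · rw [pn_inj]; exact ⟨rfl, by simp only [Fin.val_mk]; omega⟩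
    · intro h
      obtain ⟨rfl, h2⟩ := (pn_inj k s).mp h
      simp only [Fin.val_mk] at h2
      exact ⟨rfl, Or.inr ⟨by omega, ha⟩⟩


lemma M_ge : 6 ≤ M k := by unfold M; omega

lemma not_cpos_one : ¬ cpos k s 1 := fun h => by have := cpos_bounds k s h; omega

lemma not_cpos_M1 : ¬ cpos k s (M k - 1) := by
  intro h
  have := cpos_bounds k s h
  unfold M at this
  omega

lemma f_one : f k s ⟨1, by have := M_ge k; omega⟩ = 1 :=
  f_eq_one k s _ (by simp only [Fin.val_mk]; omega)
    (by have := M_ge k; simp only [Fin.val_mk]; omega) (not_cpos_one k s)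

lemma f_M1 : f k s ⟨M k - 1, by omega⟩ = 1 :=
  f_eq_one k s _ (by have := M_ge k; simp only [Fin.val_mk]; omega)
    (by have := M_ge k; simp only [Fin.val_mk]; omega) (not_cpos_M1 k s)

lemma dg_sp0 : ((GG k s).neighborSet (sp k s ⟨0, by omega⟩)).ncard = 1 := by
  rw [nb_sp0]; exact Set.ncard_singleton _

lemma dg_spM : ((GG k s).neighborSet (sp k s ⟨M k, by omega⟩)).ncard = 1 := by
  rw [nb_spM]; exact Set.ncard_singleton _

lemma dg_sp_mid (iv : ℕ) (h1 : 0 < iv) (h2 : iv < M k) :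
    ((GG k s).neighborSet (sp k s ⟨iv, by omega⟩)).ncard = 3 := by
  rw [nb_sp_mid k s h1 h2]
  rw [Set.ncard_eq_three]
  refine ⟨_, _, _, ?_, ?_, ?_, rfl⟩
  · rw [Ne, sp_inj]; simp only [Fin.val_mk]; omega
  · exact sp_ne_pn k s _ _ _
  · exact sp_ne_pn k s _ _ _

lemma dg_center_one {i : Fin (M k + 1)} {a : Fin (f k s i)} (ha : a.val = 0)
    (hf : f k s i = 1) : ((GG k s).neighborSet (pn k s i a)).ncard = 1 := by
  rw [nb_pn_center_one k s ha hf]; exact Set.ncard_singleton _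

lemma dg_center_three {i : Fin (M k + 1)} {a : Fin (f k s i)} (ha : a.val = 0)
    (hf : f k s i = 3) : ((GG k s).neighborSet (pn k s i a)).ncard = 3 := by
  rw [nb_pn_center_three k s ha hf]
  rw [Set.ncard_eq_three]
  refine ⟨_, _, _, ?_, ?_, ?_, rfl⟩
  · exact sp_ne_pn k s _ _ _
  · exact sp_ne_pn k s _ _ _
  · intro h
    obtain ⟨-, h2⟩ := (pn_inj k s).mp h
    simp only [Fin.val_mk] at h2
    omega

lemma dg_leaf {i : Fin (M k + 1)} {a : Fin (f k s i)} (ha : a.val ≠ 0) :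
    ((GG k s).neighborSet (pn k s i a)).ncard = 1 := by
  rw [nb_pn_leaf k s ha]; exact Set.ncard_singleton _

lemma trivalent : ∀ v : Vt k s,
    ((GG k s).neighborSet v).ncard = 1 ∨ ((GG k s).neighborSet v).ncard = 3 := by
  intro v
  match v with
  | Sum.inl i =>
    have hlt := i.isLt
    rcases Nat.eq_zero_or_pos i.val with h0 | h0
    · left
      have : (Sum.inl i : Vt k s) = sp k s ⟨0, by omega⟩ := by
        rw [show (Sum.inl i : Vt k s) = sp k s i from rfl, sp_inj]; simpa using h0
      rw [this]; exact dg_sp0 k s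
    · by_cases hM : i.val = M k
      · left
        have : (Sum.inl i : Vt k s) = sp k s ⟨M k, by omega⟩ := by
          rw [show (Sum.inl i : Vt k s) = sp k s i from rfl, sp_inj]; simpa using hM
        rw [this]; exact dg_spM k s
      · right
        have hm : i.val < M k := by omega
        have : (Sum.inl i : Vt k s) = sp k s ⟨i.val, by omega⟩ := by
          rw [show (Sum.inl i : Vt k s) = sp k s i from rfl, sp_inj]
        rw [this]; exact dg_sp_mid k s i.val h0 hm
  | Sum.inr ⟨i, a⟩ =>
    by_cases ha : a.val = 0
    · rcases f_vals k s i with h | h | h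
      · exact absurd (h ▸ a.pos) (by omega)
      · left; exact dg_center_one k s ha h
      · right; exact dg_center_three k s ha h
    · left; exact dg_leaf k s ha

/-- the canonical list of special vertices -/
def IsSpec (x : Vt k s) : Prop :=
  x = sp k s ⟨1, by have := M_ge k; omega⟩ ∨ x = sp k s ⟨M k - 1, by omega⟩ ∨
    ∃ (i : Fin (M k + 1)) (_ : f k s i = 3), x = pn k s i ⟨0, by omega⟩

lemma spec_sp1 : TTT2.Sp (GG k s) (sp k s ⟨1, by have := M_ge k; omega⟩) := by
  have hM := M_ge k
  refine ⟨dg_sp_mid k s 1 (by omega) (by omega), sp k s ⟨0, by omega⟩,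
    pn k s ⟨1, by omega⟩ ⟨0, by rw [f_one]; omega⟩, ?_, ?_, ?_, ?_, ?_⟩
  · exact sp_ne_pn k s _ _ _
  · rw [adj_sp_sp]; simp
  · rw [adj_sp_pn]; exact ⟨rfl, rfl⟩
  · exact dg_sp0 k s
  · exact dg_center_one k s rfl (f_one k s)

lemma spec_spM1 : TTT2.Sp (GG k s) (sp k s ⟨M k - 1, by omega⟩) := by
  have hM := M_ge k
  refine ⟨dg_sp_mid k s (M k - 1) (by omega) (by omega), sp k s ⟨M k, by omega⟩,
    pn k s ⟨M k - 1, by omega⟩ ⟨0, by rw [f_M1]; omega⟩, ?_, ?_, ?_, ?_, ?_⟩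
  · exact sp_ne_pn k s _ _ _
  · rw [adj_sp_sp]; simp only [Fin.val_mk]; omega
  · rw [adj_sp_pn]; exact ⟨rfl, rfl⟩
  · exact dg_spM k s
  · exact dg_center_one k s rfl (f_M1 k s)

lemma spec_center {i : Fin (M k + 1)} (hf : f k s i = 3) :
    TTT2.Sp (GG k s) (pn k s i ⟨0, by omega⟩) := by
  refine ⟨dg_center_three k s rfl hf, pn k s i ⟨1, by omega⟩, pn k s i ⟨2, by omega⟩,
    ?_, ?_, ?_, ?_, ?_⟩
  · intro h
    obtain ⟨-, h2⟩ := (pn_inj k s).mp h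
    simp only [Fin.val_mk] at h2
    omega
  · rw [adj_pn_pn]; exact ⟨rfl, Or.inl ⟨rfl, by simp⟩⟩
  · rw [adj_pn_pn]; exact ⟨rfl, Or.inl ⟨rfl, by simp⟩⟩
  · exact dg_leaf k s (by simp)
  · exact dg_leaf k s (by simp)

lemma sp_spec (x : Vt k s) : TTT2.Sp (GG k s) x ↔ IsSpec k s x := by
  constructor
  · rintro ⟨h3, a, b, hab, hxa, hxb, ha1, hb1⟩
    match x with
    | Sum.inl i =>
      have hlt := i.isLt
      have hM := M_ge k
      rcases Nat.eq_zero_or_pos i.val with h0 | h0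
      · rw [show (Sum.inl i : Vt k s) = sp k s i from rfl] at h3
        rw [show i = (⟨0, by omega⟩ : Fin (M k + 1)) from Fin.ext (by simp only [Fin.val_mk]; omega)] at h3
        rw [dg_sp0] at h3
        omega
      by_cases hMM : i.val = M k
      · rw [show (Sum.inl i : Vt k s) = sp k s i from rfl] at h3
        rw [show i = (⟨M k, by omega⟩ : Fin (M k + 1)) from Fin.ext (by simp only [Fin.val_mk]; omega)] at h3
        rw [dg_spM] at h3
        omega
      have hmid : i.val < M k := by omega
      by_cases h1 : i.val = 1
      · left
        rw [show (Sum.inl i : Vt k s) = sp k s i from rfl, sp_inj]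
        simpa using h1
      by_cases hM1 : i.val = M k - 1
      · right; left
        rw [show (Sum.inl i : Vt k s) = sp k s i from rfl, sp_inj]
        simpa using hM1
      -- middle case : derive contradiction
      exfalso
      have hie : (Sum.inl i : Vt k s) = sp k s ⟨i.val, by omega⟩ := by
        rw [show (Sum.inl i : Vt k s) = sp k s i from rfl, sp_inj]
      rw [hie] at hxa hxb
      have hmem : ∀ c : Vt k s, (GG k s).Adj (sp k s ⟨i.val, by omega⟩) c →
          ((GG k s).neighborSet c).ncard = 1 → c = pn k s ⟨i.val, by omega⟩
            ⟨0, (f_pos_iff k s _).mpr ⟨h0, hmid⟩⟩ := by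
        intro c hc hc1
        have : c ∈ (GG k s).neighborSet (sp k s ⟨i.val, by omega⟩) := hc
        rw [nb_sp_mid k s h0 hmid] at this
        rcases this with rfl | rfl | rfl
        · rw [dg_sp_mid k s (i.val - 1) (by omega) (by omega)] at hc1; omega
        · rw [dg_sp_mid k s (i.val + 1) (by omega) (by omega)] at hc1; omega
        · rfl
      have hA := hmem a hxa ha1
      have hB := hmem b hxb hb1
      exact hab (hA.trans hB.symm)
    | Sum.inr ⟨i, a0⟩ =>
      right; right
      by_cases ha : a0.val = 0
      · rcases f_vals k s i with h | h | h
        · exact absurd (h ▸ a0.pos) (by omega)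
        · rw [show (Sum.inr ⟨i, a0⟩ : Vt k s) = pn k s i a0 from rfl,
            dg_center_one k s ha h] at h3
          omega
        · refine ⟨i, h, ?_⟩
          rw [show (Sum.inr ⟨i, a0⟩ : Vt k s) = pn k s i a0 from rfl, pn_inj]
          exact ⟨rfl, by simpa using ha⟩
      · rw [show (Sum.inr ⟨i, a0⟩ : Vt k s) = pn k s i a0 from rfl, dg_leaf k s ha] at h3
        omega
  · rintro (rfl | rfl | ⟨i, hf, rfl⟩)
    · exact spec_sp1 k s
    · exact spec_spM1 k s
    · exact spec_center k s hf


lemma hzr : (TS k s).ht ((TS k s).root) = 0 := rfl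

lemma iter_par_sp : ∀ (d iv : ℕ) (h : iv < M k + 1) (_ : d ≤ iv),
    (par k s)^[d] (sp k s ⟨iv, h⟩) = sp k s ⟨iv - d, by omega⟩ := by
  intro d
  induction d with
  | zero => intro iv h hd; rw [Function.iterate_zero_apply, sp_inj]; simp
  | succ d ih =>
    intro iv h hd
    rw [Function.iterate_succ_apply]
    have h1 : par k s (sp k s ⟨iv, h⟩) = sp k s ⟨iv - 1, by omega⟩ := by
      rw [par_sp, sp_inj]
    rw [h1, ih (iv - 1) (by omega) (by omega), sp_inj]
    simp only [Fin.val_mk]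
    omega

lemma par_center {i : Fin (M k + 1)} (hp : 0 < f k s i) :
    par k s (pn k s i ⟨0, hp⟩) = sp k s i := by
  rw [par_pn]; simp

lemma dist_center_sp1 {i : Fin (M k + 1)} (hf : f k s i = 3) :
    (GG k s).dist (pn k s i ⟨0, by omega⟩) (sp k s ⟨1, by have := M_ge k; omega⟩) = i.val := by
  have hc : cpos k s i.val := (f_eq_three_iff k s i).mp hf
  have hb := cpos_bounds k s hc
  have hM := M_ge k
  have hlt := i.isLt
  have hiv : 1 ≤ i.val := by omega
  have hht : (TS k s).ht (pn k s i ⟨0, by omega⟩) = i.val + 1 := by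
    rw [show (TS k s).ht = hgt k s from rfl, hgt_pn]; simp
  obtain ⟨w, hw⟩ := (TS k s).walk_iterate (i.val - 1 + 1) (pn k s i ⟨0, by omega⟩)
    (hzr k s) (by omega)
  have he : (par k s)^[i.val - 1 + 1] (pn k s i ⟨0, by omega⟩) =
      sp k s ⟨1, by have := M_ge k; omega⟩ := by
    rw [Function.iterate_succ_apply, par_center]
    have h5 : (sp k s i) = sp k s ⟨i.val, by omega⟩ := by rw [sp_inj]
    rw [h5, iter_par_sp k s (i.val - 1) i.val (by omega) (by omega), sp_inj]
    simp only [Fin.val_mk]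
    omega
  refine (TS k s).dist_eq_of _ _ i.val (w.copy rfl he)
    (by exact (SimpleGraph.Walk.length_copy _ _ _).trans (by rw [hw]; omega)) ?_
  left
  rw [hht, show (TS k s).ht = hgt k s from rfl, hgt_sp]
  simp only [Fin.val_mk]
  omega

lemma dist_sp1_spM1 :
    (GG k s).dist (sp k s ⟨1, by have := M_ge k; omega⟩) (sp k s ⟨M k - 1, by omega⟩)
      = M k - 2 := by
  have hM := M_ge k
  rw [SimpleGraph.dist_comm]
  obtain ⟨w, hw⟩ := (TS k s).walk_iterate (M k - 2) (sp k s ⟨M k - 1, by omega⟩) (hzr k s)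
    (by rw [show (TS k s).ht = hgt k s from rfl, hgt_sp]; simp only [Fin.val_mk]; omega)
  have he : (par k s)^[M k - 2] (sp k s ⟨M k - 1, by omega⟩) =
      sp k s ⟨1, by have := M_ge k; omega⟩ := by
    rw [iter_par_sp k s (M k - 2) (M k - 1) (by omega) (by omega), sp_inj]
    simp only [Fin.val_mk]
    omega
  refine (TS k s).dist_eq_of _ _ (M k - 2) (w.copy rfl he) (by exact (SimpleGraph.Walk.length_copy _ _ _).trans hw) ?_
  left
  rw [show (TS k s).ht = hgt k s from rfl, hgt_sp, hgt_sp]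
  simp only [Fin.val_mk]
  omega

lemma dist_center_center {i j : Fin (M k + 1)} (hfi : f k s i = 3) (hfj : f k s j = 3)
    (hij : i.val ≤ j.val) :
    (GG k s).dist (pn k s j ⟨0, by omega⟩) (pn k s i ⟨0, by omega⟩)
      ≤ j.val - i.val + 2 := by
  have hci := cpos_bounds k s ((f_eq_three_iff k s i).mp hfi)
  have hcj := cpos_bounds k s ((f_eq_three_iff k s j).mp hfj)
  obtain ⟨w, hw⟩ := (TS k s).walk_iterate (j.val - i.val + 1) (pn k s j ⟨0, by omega⟩)
    (hzr k s)
    (by rw [show (TS k s).ht = hgt k s from rfl, hgt_pn]; simp)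
  have he : (par k s)^[j.val - i.val + 1] (pn k s j ⟨0, by omega⟩) = sp k s i := by
    rw [Function.iterate_succ_apply, par_center]
    have h5 : (sp k s j) = sp k s ⟨j.val, by omega⟩ := by rw [sp_inj]
    rw [h5, iter_par_sp k s (j.val - i.val) j.val (by omega) (by omega), sp_inj]
    simp only [Fin.val_mk]
    omega
  have hadj : (GG k s).Adj (sp k s i) (pn k s i ⟨0, by omega⟩) := by
    rw [adj_sp_pn]; exact ⟨rfl, rfl⟩
  have hle := SimpleGraph.dist_le ((w.copy rfl he).concat hadj)
  have hl : ((w.copy rfl he).concat hadj).length = w.length + 1 :=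
    (SimpleGraph.Walk.length_concat _ _).trans (congrArg (· + 1) (SimpleGraph.Walk.length_copy _ _ _))
  exact hle.trans (by omega)

lemma dist_spM1_center {i : Fin (M k + 1)} (hfi : f k s i = 3) :
    (GG k s).dist (sp k s ⟨M k - 1, by omega⟩) (pn k s i ⟨0, by omega⟩)
      ≤ M k - i.val := by
  have hci := cpos_bounds k s ((f_eq_three_iff k s i).mp hfi)
  have hM := M_ge k
  have hi1 : i.val ≤ M k - 1 := by unfold M at *; omega
  obtain ⟨w, hw⟩ := (TS k s).walk_iterate (M k - 1 - i.val) (sp k s ⟨M k - 1, by omega⟩)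
    (hzr k s)
    (by rw [show (TS k s).ht = hgt k s from rfl, hgt_sp]; simp only [Fin.val_mk]; omega)
  have he : (par k s)^[M k - 1 - i.val] (sp k s ⟨M k - 1, by omega⟩) = sp k s i := by
    rw [iter_par_sp k s (M k - 1 - i.val) (M k - 1) (by omega) (by omega), sp_inj]
    simp only [Fin.val_mk]
    omega
  have hadj : (GG k s).Adj (sp k s i) (pn k s i ⟨0, by omega⟩) := by
    rw [adj_sp_pn]; exact ⟨rfl, rfl⟩
  have hle := SimpleGraph.dist_le ((w.copy rfl he).concat hadj)
  have hl : ((w.copy rfl he).concat hadj).length = w.length + 1 :=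
    (SimpleGraph.Walk.length_concat _ _).trans (congrArg (· + 1) (SimpleGraph.Walk.length_copy _ _ _))
  refine le_trans hle ?_
  omega


lemma key (j : Fin k) :
    s j = true ↔ (2*k+3+j.val) ∈ TTT2.Dinv (GG k s) := by
  have hj := j.isLt
  have hM := M_ge k
  constructor
  · intro hsj
    have hlt : 2*k+3+j.val < M k + 1 := by unfold M; omega
    have hf : f k s ⟨2*k+3+j.val, hlt⟩ = 3 :=
      (f_eq_three_iff k s _).mpr ⟨j, hsj, rfl⟩
    refine ⟨pn k s ⟨2*k+3+j.val, hlt⟩ ⟨0, by omega⟩, sp k s ⟨1, by omega⟩, ?_, ?_, ?_⟩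
    · rw [sp_spec]
      exact Or.inr (Or.inr ⟨_, hf, rfl⟩)
    · rw [sp_spec]
      exact Or.inl rfl
    · exact dist_center_sp1 k s hf
  · rintro ⟨x, y, hx, hy, hd⟩
    rw [sp_spec] at hx hy
    rcases hx with rfl | rfl | ⟨i1, hf1, rfl⟩ <;> rcases hy with rfl | rfl | ⟨i2, hf2, rfl⟩
    · exfalso
      rw [SimpleGraph.dist_self] at hd
      omega
    · exfalso
      rw [dist_sp1_spM1] at hd
      unfold M at hd
      omega
    · rw [SimpleGraph.dist_comm, dist_center_sp1 k s hf2] at hd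
      obtain ⟨j', hsj', hval⟩ := (f_eq_three_iff k s i2).mp hf2
      have hjj : j = j' := Fin.ext (by omega)
      rw [hjj]
      exact hsj'
    · exfalso
      rw [SimpleGraph.dist_comm, dist_sp1_spM1] at hd
      unfold M at hd
      omega
    · exfalso
      rw [SimpleGraph.dist_self] at hd
      omega
    · exfalso
      have hub := dist_spM1_center k s hf2
      rw [hd] at hub
      have hci := cpos_bounds k s ((f_eq_three_iff k s i2).mp hf2)
      unfold M at hub
      omega
    · rw [dist_center_sp1 k s hf1] at hd
      obtain ⟨j', hsj', hval⟩ := (f_eq_three_iff k s i1).mp hf1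
      have hjj : j = j' := Fin.ext (by omega)
      rw [hjj]
      exact hsj'
    · exfalso
      have hub := dist_spM1_center k s hf1
      rw [SimpleGraph.dist_comm] at hd
      rw [hd] at hub
      have hci := cpos_bounds k s ((f_eq_three_iff k s i1).mp hf1)
      unfold M at hub
      omega
    · exfalso
      have hc1 := cpos_bounds k s ((f_eq_three_iff k s i1).mp hf1)
      have hc2 := cpos_bounds k s ((f_eq_three_iff k s i2).mp hf2)
      rcases le_total i1.val i2.val with hle | hle
      · have hub := dist_center_center k s hf1 hf2 hle
        rw [SimpleGraph.dist_comm] at hd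
        rw [hd] at hub
        omega
      · have hub := dist_center_center k s hf2 hf1 hle
        rw [hd] at hub
        omega


lemma card_vt : Fintype.card (Vt k s) ≤ 12*k+28 := by
  have h1 : Fintype.card (Vt k s) = Fintype.card (Fin (M k + 1)) +
      Fintype.card (Σ i : Fin (M k + 1), Fin (f k s i)) := Fintype.card_sum
  have h3 := Finset.sum_le_card_nsmul Finset.univ (fun i : Fin (M k + 1) => f k s i) 3
    (fun i _ => by rcases f_vals k s i with h | h | h <;> simp [h])
  rw [h1, Fintype.card_sigma]
  simp only [Fintype.card_fin, smul_eq_mul, Finset.card_univ] at *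
  unfold M at *
  omega

noncomputable def eqv : Vt k s ≃ Fin (Fintype.card (Vt k s)) := Fintype.equivFin _

noncomputable def Gfin : SimpleGraph (Fin (Fintype.card (Vt k s))) :=
  SimpleGraph.comap (eqv k s).symm (GG k s)

noncomputable def isoG : GG k s ≃g Gfin k s where
  toEquiv := eqv k s
  map_rel_iff' := by
    intro a b
    show (GG k s).Adj ((eqv k s).symm ((eqv k s) a)) ((eqv k s).symm ((eqv k s) b)) ↔ _
    rw [Equiv.symm_apply_apply, Equiv.symm_apply_apply]

lemma gfin_tree : (Gfin k s).IsTree :=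
  TTT2.iso_isTree (isoG k s) ⟨(TS k s).connected, (TS k s).acyclic⟩

lemma gfin_trivalent : ∀ v, ((Gfin k s).neighborSet v).ncard = 1 ∨
    ((Gfin k s).neighborSet v).ncard = 3 := by
  intro v
  have h := TTT2.iso_ncard_neighborSet (isoG k s) ((eqv k s).symm v)
  have hv : (isoG k s) ((eqv k s).symm v) = v := Equiv.apply_symm_apply _ v
  rw [hv] at h
  rw [h]
  exact trivalent k s _

lemma gfin_edges : (Gfin k s).edgeSet.ncard = Fintype.card (Vt k s) - 1 := by
  classical
  haveI : Fintype (Gfin k s).edgeSet := Fintype.ofFinite _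
  have h := (gfin_tree k s).card_edgeFinset
  rw [Fintype.card_fin] at h
  rw [Set.ncard_eq_toFinset_card']
  rw [show (Gfin k s).edgeSet.toFinset = (Gfin k s).edgeFinset from rfl]
  omega

lemma gfin_noniso {t : Fin k → Bool} (hst : s ≠ t) :
    ¬ Nonempty (Gfin k s ≃g Gfin k t) := by
  rintro ⟨e⟩
  have e1 : GG k s ≃g GG k t := ((isoG k s).trans e).trans (isoG k t).symm
  have hD : TTT2.Dinv (GG k s) = TTT2.Dinv (GG k t) := TTT2.iso_Dinv e1
  apply hst
  funext j
  have h1 := key k s j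
  have h2 := key k t j
  rw [hD] at h1
  cases hs : s j <;> cases ht : t j <;> simp_all

end CT

theorem trivalent_trees_grow_exponentially :
    ∃ (c : ℝ) (E₀ : ℕ), 1 < c ∧ ∀ E : ℕ, E₀ ≤ E →
      ∃ (N : ℕ) (F : Fin N → Σ n : ℕ, SimpleGraph (Fin n)),
        c ^ E ≤ (N : ℝ) ∧
        (∀ a : Fin N, IsTrivalentTree (F a).2 ∧ ((F a).2.edgeSet).ncard ≤ E) ∧
        (∀ a b : Fin N, a ≠ b → ¬ Nonempty ((F a).2 ≃g (F b).2)) := by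
  refine ⟨(2:ℝ) ^ ((24:ℝ)⁻¹), 100, ?_, ?_⟩
  · rw [show (1:ℝ) = (2:ℝ) ^ (0:ℝ) from (Real.rpow_zero 2).symm]
    exact (Real.rpow_lt_rpow_left_iff (by norm_num)).mpr (by norm_num)
  intro E hE
  set k := (E - 28) / 12 with hk
  have hkE : 12*k + 28 ≤ E := by omega
  have hEk : E ≤ 24 * k := by omega
  have e : (Fin k → Bool) ≃ Fin (2^k) :=
    Fintype.equivFinOfCardEq (by simp [Fintype.card_fun])
  refine ⟨2^k, fun a => ⟨_, CT.Gfin k (e.symm a)⟩, ?_, ?_, ?_⟩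
  · have h24 : ((2:ℝ) ^ ((24:ℝ)⁻¹)) ^ E = (2:ℝ) ^ (((24:ℝ)⁻¹) * E) := by
      rw [← Real.rpow_natCast ((2:ℝ) ^ ((24:ℝ)⁻¹)) E, ← Real.rpow_mul (by norm_num)]
    have h2k : ((2^k : ℕ) : ℝ) = (2:ℝ) ^ ((k : ℕ) : ℝ) := by
      rw [Real.rpow_natCast]
      push_cast
      ring
    rw [h24, h2k]
    apply Real.rpow_le_rpow_of_exponent_le (by norm_num)
    rw [inv_mul_le_iff₀ (by norm_num)]
    exact_mod_cast hEk
  · intro a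
    refine ⟨⟨CT.gfin_tree k _, CT.gfin_trivalent k _⟩, ?_⟩
    have h1 := CT.gfin_edges k (e.symm a)
    have h2 := CT.card_vt k (e.symm a)
    simp only []
    omega
  · intro a b hab
    apply CT.gfin_noniso
    intro hs
    exact hab (e.symm.injective hs)
end

section
/- The symmetric group S_5 acting on {0,1,2,3,4} acts on the set of 20 dryads (equivalence classes of symbols ab|cde as defined) by permuting the letters, and this action restricted to the alternating group A_5 has exactly two orbits, each of size 10. -/
set_option maxRecDepth 100000
set_option maxHeartbeats 4000000



/-!
Statement 13: `S₅` acts on the 20 dryads by permuting letters (i.e. by left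
multiplication on the quotient `Perm (Fin 5) ⧸ K`, which is well defined), and
the restriction of this action to `A₅` has exactly two orbits, each of size
10; any odd permutation exchanges the two orbits.
-/

/-- Cyclic permutation of the three positions after the bar: `(2 3 4)`. -/
def cyc : Equiv.Perm (Fin 5) := Equiv.swap 2 4 * Equiv.swap 2 3

/-- Transposition of the positions before the bar together with reversal of
the positions after the bar. -/
def rev : Equiv.Perm (Fin 5) := Equiv.swap 0 1 * Equiv.swap 2 4

/-- The group of equivalences among symbols. -/
def dryadGroup : Subgroup (Equiv.Perm (Fin 5)) := Subgroup.closure {cyc, rev}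

/-- A dryad: an equivalence class of symbols `ab|cde`, where the symbol with
letters `(a,b,c,d,e)` is the permutation sending positions to letters. -/
abbrev Dryad : Type := Equiv.Perm (Fin 5) ⧸ dryadGroup


def dryadList : List (Equiv.Perm (Fin 5)) := [1, cyc, cyc*cyc, rev, rev*cyc, rev*cyc*cyc]

lemma mem_dryadGroup_iff (g : Equiv.Perm (Fin 5)) : g ∈ dryadGroup ↔ g ∈ dryadList := by
  have hmul : ∀ x ∈ dryadList, ∀ y ∈ dryadList, x * y ∈ dryadList := by decide
  have hinv : ∀ x ∈ dryadList, x⁻¹ ∈ dryadList := by decide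
  constructor
  · intro h
    refine Subgroup.closure_induction ?_ ?_ ?_ ?_ h
    · rintro x (rfl|rfl) <;> decide
    · decide
    · intro x y _ _ hx hy; exact hmul x hx y hy
    · intro x _ hx; exact hinv x hx
  · intro h
    have hc : cyc ∈ dryadGroup := Subgroup.subset_closure (by left; rfl)
    have hr : rev ∈ dryadGroup := Subgroup.subset_closure (by right; rfl)
    fin_cases h
    · exact one_mem _
    · exact hc
    · exact mul_mem hc hc
    · exact hr
    · exact mul_mem hr hc
    · exact mul_mem (mul_mem hr hc) hc

instance instDMem : DecidablePred (· ∈ dryadGroup) := fun g =>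
  decidable_of_iff _ (mem_dryadGroup_iff g).symm

instance instDRel : DecidableRel (QuotientGroup.leftRel dryadGroup).r := fun x y =>
  decidable_of_iff (x⁻¹ * y ∈ dryadList)
    (by rw [← mem_dryadGroup_iff]; exact (QuotientGroup.leftRel_apply).symm)

instance instDEqDryad : DecidableEq Dryad := @Quotient.decidableEq _ _ instDRel
instance instFinDryad : Fintype Dryad := @Quotient.fintype _ _ _ instDRel

instance instDOrbit (d x : Dryad) :
    Decidable (x ∈ MulAction.orbit (alternatingGroup (Fin 5)) d) :=
  decidable_of_iff (∃ g : alternatingGroup (Fin 5), g • d = x) Iff.rfl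

instance instDOrbitRel :
    DecidableRel (MulAction.orbitRel (alternatingGroup (Fin 5)) Dryad).r :=
  fun x y => instDOrbit y x

instance instFinOrbQuot :
    Fintype (MulAction.orbitRel.Quotient (alternatingGroup (Fin 5)) Dryad) :=
  @Quotient.fintype _ _ _ instDOrbitRel

lemma sign_of_mem_dryadGroup {h : Equiv.Perm (Fin 5)} (hh : h ∈ dryadGroup) :
    Equiv.Perm.sign h = 1 := by
  have : ∀ h ∈ dryadList, Equiv.Perm.sign h = 1 := by decide
  exact this _ ((mem_dryadGroup_iff h).mp hh)

/-- The stabilizer of `mk p` is the conjugate of `dryadGroup` by `p`. -/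
def stabEquiv (p : Equiv.Perm (Fin 5)) :
    dryadGroup ≃
      MulAction.stabilizer (alternatingGroup (Fin 5)) (QuotientGroup.mk p : Dryad) where
  toFun k := ⟨⟨p * k * p⁻¹, by
      rw [Equiv.Perm.mem_alternatingGroup]
      simp [sign_of_mem_dryadGroup k.2]⟩, by
      rw [MulAction.mem_stabilizer_iff]
      show QuotientGroup.mk ((p * ↑k * p⁻¹) * p) = (QuotientGroup.mk p : Dryad)
      rw [QuotientGroup.eq]
      have : ((p * ↑k * p⁻¹) * p)⁻¹ * p = (↑k)⁻¹ := by group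
      rw [this]
      exact inv_mem k.2⟩
  invFun g := ⟨p⁻¹ * ↑↑g * p, by
      have hg : (↑g : Equiv.Perm (Fin 5)) • (QuotientGroup.mk p : Dryad) =
          QuotientGroup.mk p := g.2
      have hg' : QuotientGroup.mk ((↑↑g : Equiv.Perm (Fin 5)) * p) =
          (QuotientGroup.mk p : Dryad) := hg
      rw [QuotientGroup.eq] at hg'
      have h2 : ((↑↑g : Equiv.Perm (Fin 5)) * p)⁻¹ * p = (p⁻¹ * ↑↑g * p)⁻¹ := by group
      rw [h2] at hg'
      exact (inv_mem_iff).mp hg'⟩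
  left_inv k := Subtype.ext (by simp; group)
  right_inv g := Subtype.ext (Subtype.ext (by simp; group))

theorem a5_has_two_orbits_of_ten_on_dryads :
    -- the action of `S₅` by permuting letters is left multiplication on classes:
    (∀ (σ p : Equiv.Perm (Fin 5)),
      σ • (QuotientGroup.mk p : Dryad) = QuotientGroup.mk (σ * p)) ∧
    -- `A₅` has exactly two orbits on the 20 dryads:
    Nat.card (MulAction.orbitRel.Quotient (alternatingGroup (Fin 5)) Dryad) = 2 ∧
    -- each orbit has size 10:
    (∀ d : Dryad, (MulAction.orbit (alternatingGroup (Fin 5)) d).ncard = 10) ∧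
    -- any odd permutation exchanges the two orbits:
    (∀ σ : Equiv.Perm (Fin 5), σ ∉ alternatingGroup (Fin 5) →
      ∀ d : Dryad, σ • d ∉ MulAction.orbit (alternatingGroup (Fin 5)) d) := by
  refine ⟨fun σ p => rfl, ?_, ?_, ?_⟩
  · rw [Nat.card_eq_fintype_card]; decide
  · intro d
    obtain ⟨p, rfl⟩ := QuotientGroup.mk_surjective d
    have hstab : Fintype.card
        (MulAction.stabilizer (alternatingGroup (Fin 5)) (QuotientGroup.mk p : Dryad)) = 6 := by
      rw [← Fintype.card_congr (stabEquiv p)]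
      decide
    have hA5 : Fintype.card (alternatingGroup (Fin 5)) = 60 := by
      have h2 : 2 * Fintype.card (alternatingGroup (Fin 5)) =
          Fintype.card (Equiv.Perm (Fin 5)) := two_mul_card_alternatingGroup
      rw [Fintype.card_perm, Fintype.card_fin,
        show Nat.factorial 5 = 120 from rfl] at h2
      omega
    have key := MulAction.card_orbit_mul_card_stabilizer_eq_card_group
      (alternatingGroup (Fin 5)) (QuotientGroup.mk p : Dryad)
    rw [hstab, hA5] at key
    rw [← Nat.card_coe_set_eq, Nat.card_eq_fintype_card]
    omega
  · have hd : ∀ h ∈ dryadList, Equiv.Perm.sign h = 1 := by decide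
    intro σ hσ d hmem
    obtain ⟨p, rfl⟩ := QuotientGroup.mk_surjective d
    obtain ⟨g, hg⟩ := hmem
    have hg' : QuotientGroup.mk ((g : Equiv.Perm (Fin 5)) * p) =
        (QuotientGroup.mk (σ * p) : Dryad) := hg
    rw [QuotientGroup.eq] at hg'
    have h1 : Equiv.Perm.sign (((g : Equiv.Perm (Fin 5)) * p)⁻¹ * (σ * p)) = 1 :=
      hd _ ((mem_dryadGroup_iff _).mp hg')
    have hge : Equiv.Perm.sign (g : Equiv.Perm (Fin 5)) = 1 :=
      Equiv.Perm.mem_alternatingGroup.mp g.2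
    simp [Equiv.Perm.mem_alternatingGroup, mul_inv_rev, hge] at h1 hσ
    rcases Int.units_eq_one_or (Equiv.Perm.sign σ) with h | h
    · exact hσ h
    · rw [h] at h1; simp at h1
end

section
/- The 3-regular graph on 20 dryads, where ab|cde is joined to dc|abe, ce|abd, and ed|abc, is a connected double cover of the Petersen graph: the map sending each dryad ab|cde to its duad {a,b} is a 2-to-1 graph covering onto the Petersen graph (vertices: 2-element subsets of {0,...,4}, edges: disjoint pairs), and the covering graph is bipartite (equivalently, every circuit has even length). -/
/-- Two dryads are related iff they lie in different `A₅`-orbits and their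
duads are disjoint. -/
def dryadRel (x y : Dryad) : Prop :=
  x ∉ MulAction.orbit (alternatingGroup (Fin 5)) y ∧
  ∀ p q : Equiv.Perm (Fin 5),
    (QuotientGroup.mk p : Dryad) = x → (QuotientGroup.mk q : Dryad) = y →
    ({p 0, p 1} : Set (Fin 5)) ∩ {q 0, q 1} = ∅

/-- The graph on the 20 dryads. -/
def dryadGraph : SimpleGraph Dryad := SimpleGraph.fromRel dryadRel

/-- The vertices of the Petersen graph: 2-element subsets of `{0,…,4}`. -/
abbrev PetersenV : Type := {s : Finset (Fin 5) // s.card = 2}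

/-- The Petersen graph: duads are adjacent iff disjoint. -/
def petersen : SimpleGraph PetersenV :=
  SimpleGraph.fromRel (fun a b => Disjoint a.1 b.1)

open Equiv Equiv.Perm QuotientGroup

set_option maxRecDepth 100000

private lemma dryad_le_alt : dryadGroup ≤ alternatingGroup (Fin 5) := by
  rw [dryadGroup, Subgroup.closure_le]
  rintro x (rfl | rfl) <;>
    simp only [SetLike.mem_coe, Equiv.Perm.mem_alternatingGroup] <;> decide

private lemma sign_of_mem {h : Perm (Fin 5)} (hh : h ∈ dryadGroup) :
    Equiv.Perm.sign h = 1 :=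
  Equiv.Perm.mem_alternatingGroup.mp (dryad_le_alt hh)

private def K01 : Subgroup (Perm (Fin 5)) where
  carrier := {h | (h 0 = 0 ∧ h 1 = 1) ∨ (h 0 = 1 ∧ h 1 = 0)}
  one_mem' := Or.inl ⟨rfl, rfl⟩
  mul_mem' := by
    rintro a b (⟨ha0, ha1⟩|⟨ha0, ha1⟩) (⟨hb0, hb1⟩|⟨hb0, hb1⟩) <;>
      simp only [Set.mem_setOf_eq, Equiv.Perm.mul_apply, hb0, hb1, ha0, ha1] <;> tauto
  inv_mem' := by
    rintro a (⟨ha0, ha1⟩|⟨ha0, ha1⟩) <;>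
      simp only [Set.mem_setOf_eq, Equiv.Perm.inv_eq_iff_eq] <;> tauto

private lemma fix_of_mem {h : Perm (Fin 5)} (hh : h ∈ dryadGroup) :
    (h 0 = 0 ∧ h 1 = 1) ∨ (h 0 = 1 ∧ h 1 = 0) := by
  have hle : dryadGroup ≤ K01 := by
    rw [dryadGroup, Subgroup.closure_le]
    rintro x (rfl | rfl) <;>
      show (_ = _ ∧ _ = _) ∨ (_ = _ ∧ _ = _) <;> decide
  exact hle hh


private def duadF (p : Perm (Fin 5)) : PetersenV :=
  ⟨{p 0, p 1}, Finset.card_pair (fun e => by have := p.injective e; simp at this)⟩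

private lemma duad_respects : ∀ a b : Perm (Fin 5),
    @Setoid.r _ (QuotientGroup.leftRel dryadGroup) a b → duadF a = duadF b := by
  intro a b hab
  replace hab : a⁻¹ * b ∈ dryadGroup := QuotientGroup.leftRel_apply.mp hab
  have h0 : (a⁻¹ * b) 0 = a⁻¹ (b 0) := rfl
  have h1 : (a⁻¹ * b) 1 = a⁻¹ (b 1) := rfl
  obtain ⟨e0, e1⟩ | ⟨e0, e1⟩ := fix_of_mem hab <;>
    rw [h0, Equiv.Perm.inv_eq_iff_eq] at e0 <;>
    rw [h1, Equiv.Perm.inv_eq_iff_eq] at e1 <;>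
    refine Subtype.ext ?_
  · show ({a 0, a 1} : Finset (Fin 5)) = {b 0, b 1}
    rw [← e0, ← e1]
  · show ({a 0, a 1} : Finset (Fin 5)) = {b 0, b 1}
    rw [← e0, ← e1, Finset.pair_comm]

private def piD : Dryad → PetersenV := Quotient.lift duadF duad_respects

private lemma pi_mk (p : Perm (Fin 5)) :
    (piD (QuotientGroup.mk p)).1 = ({p 0, p 1} : Finset (Fin 5)) := rfl

private def sgnD : Dryad → ℤˣ :=
  Quotient.lift (fun p => Equiv.Perm.sign p) (by
    intro a b hab
    replace hab : a⁻¹ * b ∈ dryadGroup := QuotientGroup.leftRel_apply.mp hab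
    have := sign_of_mem hab
    rw [map_mul, map_inv] at this
    exact (inv_mul_eq_one.mp this))

private lemma sgn_mk (p : Perm (Fin 5)) :
    sgnD (QuotientGroup.mk p) = Equiv.Perm.sign p := rfl


private lemma mem_orbit_iff' (p q : Perm (Fin 5)) :
    (QuotientGroup.mk p : Dryad) ∈
      MulAction.orbit (alternatingGroup (Fin 5)) (QuotientGroup.mk q : Dryad) ↔
    Equiv.Perm.sign p = Equiv.Perm.sign q := by
  constructor
  · rintro ⟨g, hg⟩
    have hg' : (QuotientGroup.mk ((g : Perm (Fin 5)) * q) : Dryad) = QuotientGroup.mk p := hg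
    rw [QuotientGroup.eq] at hg'
    have hs := sign_of_mem hg'
    rw [map_mul, map_inv, map_mul] at hs
    have hgs : Equiv.Perm.sign (g : Perm (Fin 5)) = 1 :=
      Equiv.Perm.mem_alternatingGroup.mp g.2
    rw [hgs, one_mul] at hs
    exact (inv_mul_eq_one.mp hs).symm
  · intro hs
    refine ⟨⟨p * q⁻¹, Equiv.Perm.mem_alternatingGroup.mpr ?_⟩, ?_⟩
    · rw [map_mul, map_inv, hs, mul_inv_cancel]
    · show (QuotientGroup.mk ((p * q⁻¹) * q) : Dryad) = QuotientGroup.mk p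
      rw [inv_mul_cancel_right]

private lemma rel_mk_iff (p q : Perm (Fin 5)) :
    dryadRel (QuotientGroup.mk p) (QuotientGroup.mk q) ↔
      (Equiv.Perm.sign p ≠ Equiv.Perm.sign q ∧
       Disjoint ({p 0, p 1} : Finset (Fin 5)) {q 0, q 1}) := by
  constructor
  · rintro ⟨ho, hd⟩
    refine ⟨fun e => ho ((mem_orbit_iff' p q).mpr e), ?_⟩
    have h := hd p q rfl rfl
    rw [Finset.disjoint_left]
    intro a ha hb
    have : a ∈ ({p 0, p 1} : Set (Fin 5)) ∩ {q 0, q 1} := by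
      simp only [Finset.mem_insert, Finset.mem_singleton] at ha hb
      exact ⟨by simpa using ha, by simpa using hb⟩
    rw [h] at this
    exact this
  · rintro ⟨hs, hd⟩
    refine ⟨fun ho => hs ((mem_orbit_iff' p q).mp ho), ?_⟩
    intro p' q' hp' hq'
    have ep : ({p' 0, p' 1} : Finset (Fin 5)) = {p 0, p 1} := by
      rw [← pi_mk, ← pi_mk, hp']
    have eq' : ({q' 0, q' 1} : Finset (Fin 5)) = {q 0, q 1} := by
      rw [← pi_mk, ← pi_mk, hq']
    rw [Set.eq_empty_iff_forall_notMem]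
    rintro a ⟨haP, haQ⟩
    simp only [Set.mem_insert_iff, Set.mem_singleton_iff] at haP haQ
    have haP' : a ∈ ({p 0, p 1} : Finset (Fin 5)) := by
      rw [← ep]; simp only [Finset.mem_insert, Finset.mem_singleton]; exact haP
    have haQ' : a ∈ ({q 0, q 1} : Finset (Fin 5)) := by
      rw [← eq']; simp only [Finset.mem_insert, Finset.mem_singleton]; exact haQ
    exact Finset.disjoint_left.mp hd haP' haQ'

private lemma adj_iff (x y : Dryad) :
    dryadGraph.Adj x y ↔ sgnD x ≠ sgnD y ∧ Disjoint (piD x).1 (piD y).1 := by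
  induction x using QuotientGroup.induction_on with | H p =>
  induction y using QuotientGroup.induction_on with | H q =>
  rw [show (piD (QuotientGroup.mk p)).1 = _ from pi_mk p,
      show (piD (QuotientGroup.mk q)).1 = _ from pi_mk q, sgn_mk, sgn_mk,
      dryadGraph, SimpleGraph.fromRel_adj]
  constructor
  · rintro ⟨hne, h | h⟩
    · exact (rel_mk_iff p q).mp h
    · obtain ⟨hs, hd⟩ := (rel_mk_iff q p).mp h
      exact ⟨hs.symm, hd.symm⟩
  · rintro ⟨hs, hd⟩
    refine ⟨fun e => hs ?_, Or.inl ((rel_mk_iff p q).mpr ⟨hs, hd⟩)⟩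
    rw [← sgn_mk p, ← sgn_mk q, e]

private lemma even_fix_mem : ∀ m : Equiv.Perm (Fin 5), Equiv.Perm.sign m = 1 →
    (m 0 = 0 ∨ m 0 = 1) → (m 1 = 0 ∨ m 1 = 1) →
    m ∈ ({1, cyc, cyc*cyc, rev, rev*cyc, rev*cyc*cyc} :
      Finset (Equiv.Perm (Fin 5))) := by decide

private lemma hfin_mem : ∀ m ∈ ({1, cyc, cyc*cyc, rev, rev*cyc, rev*cyc*cyc} :
    Finset (Equiv.Perm (Fin 5))), m ∈ dryadGroup := by
  have hc : cyc ∈ dryadGroup := Subgroup.subset_closure (Set.mem_insert _ _)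
  have hr : rev ∈ dryadGroup :=
    Subgroup.subset_closure (Set.mem_insert_of_mem _ rfl)
  intro m hm
  simp only [Finset.mem_insert, Finset.mem_singleton] at hm
  rcases hm with rfl | rfl | rfl | rfl | rfl | rfl
  · exact one_mem _
  · exact hc
  · exact mul_mem hc hc
  · exact hr
  · exact mul_mem hr hc
  · exact mul_mem (mul_mem hr hc) hc

private lemma fiber_eq {x y : Dryad} (hpi : piD x = piD y) (hsgn : sgnD x = sgnD y) :
    x = y := by
  induction x using QuotientGroup.induction_on with | H p =>
  induction y using QuotientGroup.induction_on with | H q =>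
  rw [QuotientGroup.eq]
  have hduad : ({p 0, p 1} : Finset (Fin 5)) = {q 0, q 1} := by
    rw [← pi_mk, ← pi_mk, hpi]
  have hs : Equiv.Perm.sign p = Equiv.Perm.sign q := by
    rw [← sgn_mk, ← sgn_mk, hsgn]
  apply hfin_mem
  apply even_fix_mem
  · rw [map_mul, map_inv, hs, inv_mul_cancel]
  · have hq0 : q 0 ∈ ({p 0, p 1} : Finset (Fin 5)) := by
      rw [hduad]; exact Finset.mem_insert_self _ _
    have e : (p⁻¹ * q) 0 = p⁻¹ (q 0) := rfl
    simp only [Finset.mem_insert, Finset.mem_singleton] at hq0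
    rcases hq0 with h | h <;> rw [e, h] <;>
      simp [Equiv.Perm.inv_def]
  · have hq1 : q 1 ∈ ({p 0, p 1} : Finset (Fin 5)) := by
      rw [hduad]; exact Finset.mem_insert_of_mem (Finset.mem_singleton_self _)
    have e : (p⁻¹ * q) 1 = p⁻¹ (q 1) := rfl
    simp only [Finset.mem_insert, Finset.mem_singleton] at hq1
    rcases hq1 with h | h <;> rw [e, h] <;>
      simp [Equiv.Perm.inv_def]

private lemma exists_perm {a b : Fin 5} (hab : a ≠ b) :
    ∃ p : Equiv.Perm (Fin 5), p 0 = a ∧ p 1 = b := by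
  classical
  set t : Equiv.Perm (Fin 5) := Equiv.swap 0 a with ht
  have htb : t⁻¹ b ≠ 0 := by
    intro h
    have : b = t 0 := by rw [← h]; exact (Equiv.apply_symm_apply t b).symm
    rw [Equiv.swap_apply_left] at this
    exact hab this.symm
  refine ⟨t * Equiv.swap 1 (t⁻¹ b), ?_, ?_⟩
  · have : Equiv.swap (1 : Fin 5) (t⁻¹ b) 0 = 0 :=
      Equiv.swap_apply_of_ne_of_ne (by decide) (Ne.symm htb)
    show t (Equiv.swap (1 : Fin 5) (t⁻¹ b) 0) = a
    rw [this]; exact Equiv.swap_apply_left _ _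
  · show t (Equiv.swap (1 : Fin 5) (t⁻¹ b) 1) = b
    rw [Equiv.swap_apply_left]; exact Equiv.apply_symm_apply t b

private lemma units_cases (u : ℤˣ) : u = 1 ∨ u = -1 := Int.units_eq_one_or u

private lemma sgn_swap34 (p : Equiv.Perm (Fin 5)) :
    sgnD (QuotientGroup.mk (p * Equiv.swap 3 4)) = - sgnD (QuotientGroup.mk p) := by
  rw [sgn_mk, sgn_mk, map_mul, Equiv.Perm.sign_swap (by decide)]
  simp

private lemma fiber_pair (w : PetersenV) :
    ∃ x y : Dryad, x ≠ y ∧ piD ⁻¹' {w} = {x, y} := by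
  obtain ⟨a, b, hab, hw⟩ := Finset.card_eq_two.mp w.2
  obtain ⟨p, hp0, hp1⟩ := exists_perm hab
  have hpw : piD (QuotientGroup.mk p) = w := by
    apply Subtype.ext
    rw [pi_mk, hp0, hp1, hw]
  have hqw : piD (QuotientGroup.mk (p * Equiv.swap 3 4)) = w := by
    apply Subtype.ext
    rw [pi_mk]
    have e0 : (p * Equiv.swap 3 4 : Equiv.Perm (Fin 5)) 0 = p 0 := by
      show p (Equiv.swap (3:Fin 5) 4 0) = p 0
      rw [Equiv.swap_apply_of_ne_of_ne (by decide) (by decide)]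
    have e1 : (p * Equiv.swap 3 4 : Equiv.Perm (Fin 5)) 1 = p 1 := by
      show p (Equiv.swap (3:Fin 5) 4 1) = p 1
      rw [Equiv.swap_apply_of_ne_of_ne (by decide) (by decide)]
    rw [e0, e1, hp0, hp1, hw]
  have hsgn : sgnD (QuotientGroup.mk (p * Equiv.swap 3 4)) ≠
      sgnD (QuotientGroup.mk p) := by
    rw [sgn_swap34]
    intro e
    rcases units_cases (sgnD (QuotientGroup.mk p)) with h | h <;> rw [h] at e <;>
      exact absurd e (by decide)
  refine ⟨QuotientGroup.mk p, QuotientGroup.mk (p * Equiv.swap 3 4),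
    fun e => hsgn (by rw [e]), ?_⟩
  ext z
  simp only [Set.mem_preimage, Set.mem_singleton_iff, Set.mem_insert_iff]
  constructor
  · intro hz
    rcases units_cases (sgnD z) with h | h <;>
    rcases units_cases (sgnD (QuotientGroup.mk p)) with h' | h'
    · exact Or.inl (fiber_eq (by rw [hz, hpw]) (by rw [h, h']))
    · refine Or.inr (fiber_eq (by rw [hz, hqw]) ?_)
      rw [h, sgn_swap34, h']; try decide
    · refine Or.inr (fiber_eq (by rw [hz, hqw]) ?_)
      rw [h, sgn_swap34, h']; try decide
    · exact Or.inl (fiber_eq (by rw [hz, hpw]) (by rw [h, h']))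
  · rintro (rfl | rfl)
    · exact hpw
    · exact hqw

private lemma adj_mk (p q : Equiv.Perm (Fin 5)) :
    dryadGraph.Adj (QuotientGroup.mk p) (QuotientGroup.mk q) ↔
      (Equiv.Perm.sign p ≠ Equiv.Perm.sign q ∧
       Disjoint ({p 0, p 1} : Finset (Fin 5)) {q 0, q 1}) := by
  rw [adj_iff, sgn_mk, sgn_mk, pi_mk, pi_mk]

private def transHom (g : Equiv.Perm (Fin 5)) : dryadGraph →g dryadGraph where
  toFun := fun x => g • x
  map_rel' := by
    intro x y h
    induction x using QuotientGroup.induction_on with | H p =>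
    induction y using QuotientGroup.induction_on with | H q =>
    rw [adj_mk] at h
    show dryadGraph.Adj (QuotientGroup.mk (g * p)) (QuotientGroup.mk (g * q))
    rw [adj_mk]
    constructor
    · rw [map_mul, map_mul]
      intro e
      exact h.1 (mul_left_cancel e)
    · rw [Finset.disjoint_left]
      intro a ha hb
      simp only [Finset.mem_insert, Finset.mem_singleton,
        Equiv.Perm.mul_apply] at ha hb
      have ha' : g.symm a ∈ ({p 0, p 1} : Finset (Fin 5)) := by
        simp only [Finset.mem_insert, Finset.mem_singleton]
        rcases ha with h | h <;> rw [h] <;> simp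
      have hb' : g.symm a ∈ ({q 0, q 1} : Finset (Fin 5)) := by
        simp only [Finset.mem_insert, Finset.mem_singleton]
        rcases hb with h | h <;> rw [h] <;> simp
      exact Finset.disjoint_left.mp h.2 ha' hb'

private lemma reach_trans (g a b : Equiv.Perm (Fin 5))
    (h : dryadGraph.Reachable (QuotientGroup.mk a) (QuotientGroup.mk b)) :
    dryadGraph.Reachable (QuotientGroup.mk (g * a)) (QuotientGroup.mk (g * b)) :=
  h.map (transHom g)

private def Rsub : Subgroup (Equiv.Perm (Fin 5)) where
  carrier := {p | dryadGraph.Reachable (QuotientGroup.mk 1) (QuotientGroup.mk p)}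
  one_mem' := SimpleGraph.Reachable.refl _
  mul_mem' := by
    intro a b ha hb
    have h2 := reach_trans a 1 b hb
    rw [mul_one] at h2
    exact SimpleGraph.Reachable.trans ha h2
  inv_mem' := by
    intro a ha
    have h2 := reach_trans a⁻¹ 1 a ha
    rw [mul_one, inv_mul_cancel] at h2
    exact h2.symm

private lemma S_reach (m : Equiv.Perm (Fin 5)) (h1 : Equiv.Perm.sign m = -1)
    (h2 : Disjoint ({0, 1} : Finset (Fin 5)) {m 0, m 1}) : m ∈ Rsub := by
  apply SimpleGraph.Adj.reachable
  rw [adj_mk]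
  refine ⟨?_, ?_⟩
  · rw [map_one, h1]; decide
  · have e0 : (1 : Equiv.Perm (Fin 5)) 0 = 0 := rfl
    have e1 : (1 : Equiv.Perm (Fin 5)) 1 = 1 := rfl
    rw [e0, e1]
    exact h2
private lemma hsw02 : Equiv.swap (0:Fin 5) 2 ∈ Rsub := by
  have e : Equiv.swap (0:Fin 5) 2 = (Equiv.swap 0 2 * Equiv.swap 1 3 * Equiv.swap 3 4 : Equiv.Perm (Fin 5)) * (Equiv.swap 0 2 * Equiv.swap 1 3 * Equiv.swap 3 4 : Equiv.Perm (Fin 5)) * (Equiv.swap 0 2 * Equiv.swap 1 3 * Equiv.swap 3 4 : Equiv.Perm (Fin 5)) := by decide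
  rw [e]
  exact mul_mem (mul_mem (S_reach _ (by decide) (by decide)) (S_reach _ (by decide) (by decide))) (S_reach _ (by decide) (by decide))
private lemma hsw03 : Equiv.swap (0:Fin 5) 3 ∈ Rsub := by
  have e : Equiv.swap (0:Fin 5) 3 = (Equiv.swap 0 2 * Equiv.swap 1 3 * Equiv.swap 3 4 : Equiv.Perm (Fin 5)) * (Equiv.swap 0 2 * Equiv.swap 1 3 * Equiv.swap 3 4 : Equiv.Perm (Fin 5)) * (Equiv.swap 0 4 * Equiv.swap 4 1 * Equiv.swap 1 3 : Equiv.Perm (Fin 5)) := by decide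
  rw [e]
  exact mul_mem (mul_mem (S_reach _ (by decide) (by decide)) (S_reach _ (by decide) (by decide))) (S_reach _ (by decide) (by decide))
private lemma hsw04 : Equiv.swap (0:Fin 5) 4 ∈ Rsub := by
  have e : Equiv.swap (0:Fin 5) 4 = (Equiv.swap 0 2 * Equiv.swap 1 4 * Equiv.swap 4 3 : Equiv.Perm (Fin 5)) * (Equiv.swap 0 2 * Equiv.swap 1 4 * Equiv.swap 4 3 : Equiv.Perm (Fin 5)) * (Equiv.swap 0 3 * Equiv.swap 3 1 * Equiv.swap 1 4 : Equiv.Perm (Fin 5)) := by decide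
  rw [e]
  exact mul_mem (mul_mem (S_reach _ (by decide) (by decide)) (S_reach _ (by decide) (by decide))) (S_reach _ (by decide) (by decide))
private lemma hsw12 : Equiv.swap (1:Fin 5) 2 ∈ Rsub := by
  have e : Equiv.swap (1:Fin 5) 2 = (Equiv.swap 0 2 * Equiv.swap 1 3 * Equiv.swap 3 4 : Equiv.Perm (Fin 5)) * (Equiv.swap 0 3 * Equiv.swap 3 2 * Equiv.swap 1 4 : Equiv.Perm (Fin 5)) * (Equiv.swap 0 3 * Equiv.swap 3 4 * Equiv.swap 1 2 : Equiv.Perm (Fin 5)) := by decide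
  rw [e]
  exact mul_mem (mul_mem (S_reach _ (by decide) (by decide)) (S_reach _ (by decide) (by decide))) (S_reach _ (by decide) (by decide))
private lemma hsw13 : Equiv.swap (1:Fin 5) 3 ∈ Rsub := by
  have e : Equiv.swap (1:Fin 5) 3 = (Equiv.swap 0 2 * Equiv.swap 1 3 * Equiv.swap 3 4 : Equiv.Perm (Fin 5)) * (Equiv.swap 0 3 * Equiv.swap 3 2 * Equiv.swap 1 4 : Equiv.Perm (Fin 5)) * (Equiv.swap 0 3 * Equiv.swap 3 1 * Equiv.swap 1 4 : Equiv.Perm (Fin 5)) := by decide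
  rw [e]
  exact mul_mem (mul_mem (S_reach _ (by decide) (by decide)) (S_reach _ (by decide) (by decide))) (S_reach _ (by decide) (by decide))
private lemma hsw14 : Equiv.swap (1:Fin 5) 4 ∈ Rsub := by
  have e : Equiv.swap (1:Fin 5) 4 = (Equiv.swap 0 2 * Equiv.swap 1 4 * Equiv.swap 4 3 : Equiv.Perm (Fin 5)) * (Equiv.swap 0 3 * Equiv.swap 3 2 * Equiv.swap 1 4 : Equiv.Perm (Fin 5)) * (Equiv.swap 0 3 * Equiv.swap 3 1 * Equiv.swap 1 4 : Equiv.Perm (Fin 5)) := by decide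
  rw [e]
  exact mul_mem (mul_mem (S_reach _ (by decide) (by decide)) (S_reach _ (by decide) (by decide))) (S_reach _ (by decide) (by decide))

private lemma swap_mem : ∀ x y : Fin 5, x ≠ y → Equiv.swap x y ∈ Rsub := by
  have h01 : Equiv.swap (0:Fin 5) 1 ∈ Rsub := by
    have e : Equiv.swap (0:Fin 5) 1 =
        Equiv.swap 0 2 * Equiv.swap 1 2 * Equiv.swap 0 2 := by decide
    rw [e]; exact mul_mem (mul_mem hsw02 hsw12) hsw02
  have h23 : Equiv.swap (2:Fin 5) 3 ∈ Rsub := by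
    have e : Equiv.swap (2:Fin 5) 3 =
        Equiv.swap 0 2 * Equiv.swap 0 3 * Equiv.swap 0 2 := by decide
    rw [e]; exact mul_mem (mul_mem hsw02 hsw03) hsw02
  have h24 : Equiv.swap (2:Fin 5) 4 ∈ Rsub := by
    have e : Equiv.swap (2:Fin 5) 4 =
        Equiv.swap 0 2 * Equiv.swap 0 4 * Equiv.swap 0 2 := by decide
    rw [e]; exact mul_mem (mul_mem hsw02 hsw04) hsw02
  have h34 : Equiv.swap (3:Fin 5) 4 ∈ Rsub := by
    have e : Equiv.swap (3:Fin 5) 4 =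
        Equiv.swap 0 3 * Equiv.swap 0 4 * Equiv.swap 0 3 := by decide
    rw [e]; exact mul_mem (mul_mem hsw03 hsw04) hsw03
  intro x y hxy
  fin_cases x <;> fin_cases y <;>
    first
      | exact absurd rfl hxy
      | exact h01 | exact hsw02 | exact hsw03 | exact hsw04
      | exact hsw12 | exact hsw13 | exact hsw14
      | exact h23 | exact h24 | exact h34
      | (rw [Equiv.swap_comm];
         first
           | exact h01 | exact hsw02 | exact hsw03 | exact hsw04
           | exact hsw12 | exact hsw13 | exact hsw14
           | exact h23 | exact h24 | exact h34)

private lemma Rsub_top (p : Equiv.Perm (Fin 5)) : p ∈ Rsub := by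
  exact Equiv.Perm.swap_induction_on p (one_mem _)
    (fun f x y hxy hf => mul_mem (swap_mem x y hxy) hf)

private lemma dryad_connected : dryadGraph.Connected := by
  rw [SimpleGraph.connected_iff]
  refine ⟨?_, ⟨QuotientGroup.mk 1⟩⟩
  intro x y
  induction x using QuotientGroup.induction_on with | H p =>
  induction y using QuotientGroup.induction_on with | H q =>
  exact (Rsub_top p).symm.trans (Rsub_top q)



theorem dryad_graph_is_bipartite_double_cover_of_petersen :
    ∃ π : Dryad → PetersenV,
      -- `π` sends the dryad `ab|cde` to its duad `{a, b}`:
      (∀ p : Equiv.Perm (Fin 5),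
        (π (QuotientGroup.mk p)).1 = ({p 0, p 1} : Finset (Fin 5))) ∧
      -- `π` is a graph homomorphism:
      (∀ x y : Dryad, dryadGraph.Adj x y → petersen.Adj (π x) (π y)) ∧
      -- surjective and 2-to-1:
      Function.Surjective π ∧
      (∀ w : PetersenV, (π ⁻¹' {w}).ncard = 2) ∧
      -- a local isomorphism (bijective on neighbourhoods):
      (∀ x : Dryad, Set.BijOn π (dryadGraph.neighborSet x)
        (petersen.neighborSet (π x))) ∧
      -- the covering graph is connected and bipartite:
      dryadGraph.Connected ∧ dryadGraph.Colorable 2 := by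
  have hom : ∀ x y : Dryad, dryadGraph.Adj x y → petersen.Adj (piD x) (piD y) := by
    intro x y h
    rw [adj_iff] at h
    rw [petersen, SimpleGraph.fromRel_adj]
    refine ⟨?_, Or.inl h.2⟩
    intro e
    have hd := h.2
    rw [e] at hd
    have he : (piD y).1 = ∅ := by
      rwa [Finset.disjoint_self_iff_empty] at hd
    have := (piD y).2
    rw [he] at this
    simp at this
  refine ⟨piD, pi_mk, hom, ?_, ?_, ?_, dryad_connected, ?_⟩
  · intro w
    obtain ⟨x, y, hxy, hpre⟩ := fiber_pair w
    refine ⟨x, ?_⟩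
    have : x ∈ piD ⁻¹' {w} := by rw [hpre]; exact Or.inl rfl
    exact this
  · intro w
    obtain ⟨x, y, hxy, hpre⟩ := fiber_pair w
    rw [hpre]
    exact Set.ncard_pair hxy
  · intro x
    refine ⟨?_, ?_, ?_⟩
    · intro y hy
      exact hom x y hy
    · intro y hy z hz e
      have hsy := ((adj_iff x y).mp hy).1
      have hsz := ((adj_iff x z).mp hz).1
      refine fiber_eq e ?_
      rcases units_cases (sgnD y) with h1 | h1 <;>
        rcases units_cases (sgnD z) with h2 | h2 <;>
        rcases units_cases (sgnD x) with h3 | h3 <;>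
        simp_all
    · intro w hw
      rw [SimpleGraph.mem_neighborSet, petersen, SimpleGraph.fromRel_adj] at hw
      have hd : Disjoint (piD x).1 w.1 := hw.2.elim id (fun h => h.symm)
      obtain ⟨y1, y2, hne, hpre⟩ := fiber_pair w
      have hy1 : piD y1 = w := by
        have : y1 ∈ piD ⁻¹' {w} := by rw [hpre]; exact Or.inl rfl
        exact this
      have hy2 : piD y2 = w := by
        have : y2 ∈ piD ⁻¹' {w} := by rw [hpre]; exact Or.inr rfl
        exact this
      have hss : sgnD y1 ≠ sgnD y2 :=
        fun e => hne (fiber_eq (hy1.trans hy2.symm) e)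
      by_cases hc : sgnD y1 = sgnD x
      · refine ⟨y2, ?_, hy2⟩
        rw [SimpleGraph.mem_neighborSet, adj_iff]
        exact ⟨fun e => hss (hc.trans e), by rw [hy2]; exact hd⟩
      · refine ⟨y1, ?_, hy1⟩
        rw [SimpleGraph.mem_neighborSet, adj_iff]
        exact ⟨fun e => hc e.symm, by rw [hy1]; exact hd⟩
  · refine ⟨SimpleGraph.Coloring.mk
      (fun x => if sgnD x = 1 then (0 : Fin 2) else 1) ?_⟩
    intro a b hadj
    have hs := ((adj_iff a b).mp hadj).1
    show (if sgnD a = 1 then (0:Fin 2) else 1) ≠ (if sgnD b = 1 then 0 else 1)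
    by_cases h1 : sgnD a = 1 <;> by_cases h2 : sgnD b = 1
    · exact absurd (h1.trans h2.symm) hs
    · simp [h1, h2]
    · simp [h1, h2]
    · have e1 : sgnD a = -1 := (units_cases _).resolve_left h1
      have e2 : sgnD b = -1 := (units_cases _).resolve_left h2
      exact absurd (e1.trans e2.symm) hs
end
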